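/- Let k be a commutative ring with unit. The k-linear map φ : kC_{n+1} → I(P_n, k) defined on basis elements by φ(f) = Σ_{S ∈ PCS(f)} (S, f(S)) is multiplicative on basis elements: for all f, g ∈ C_{n+1}, φ(f)·φ(g) = φ(fg), where fg denotes the composite i ↦ f(g(i)) and the product on the right-hand side of φ is taken in the incidence algebra I(P_n, k). -/

import Mathlib

/-- `X ≤ Y` in the poset `Pₙ`: writing `X = {x₁ < ⋯ < x_k}` and `Y = {y₁ < ⋯ < y_l}`,
we require `k = l` and `xᵢ ≤ yᵢ` for all `i` (encoded via `List.Forall₂` on the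
sorted enumerations, which forces in particular `|X| = |Y|`). -/
def Ple {α : Type*} [LinearOrder α] (X Y : Finset α) : Prop :=
  List.Forall₂ (· ≤ ·) (X.sort (· ≤ ·)) (Y.sort (· ≤ ·))

/-- `S` is a partial cross-section of `f : [n+1] → [n+1]`: `S ⊆ [n]`
(i.e. `n+1 ∉ S`, with `n+1` modelled as `Fin.last n`), `n+1 ∉ f(S)`, and `f`
restricted to `S` is injective. -/
def PCS {n : ℕ} (f : Fin (n+1) → Fin (n+1)) : Set (Finset (Fin (n+1))) :=
  {S | Fin.last n ∉ S ∧ Fin.last n ∉ S.image f ∧ Set.InjOn f ↑S}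

/-- The poset `Pₙ` of subsets of `[n]`, viewed inside `[n+1]`: finsets of
`Fin (n+1)` avoiding the top element `Fin.last n`. -/
abbrev Pn (n : ℕ) := {S : Finset (Fin (n+1)) // Fin.last n ∉ S}

theorem Ple.refl {α : Type*} [LinearOrder α] (X : Finset α) : Ple X X :=
  List.forall₂_same.2 fun _ _ => le_rfl

theorem forall₂_le_trans {α : Type*} [Preorder α] :
    ∀ {l₁ l₂ l₃ : List α}, List.Forall₂ (· ≤ ·) l₁ l₂ → List.Forall₂ (· ≤ ·) l₂ l₃ →
      List.Forall₂ (· ≤ ·) l₁ l₃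
  | _, _, _, List.Forall₂.nil, List.Forall₂.nil => List.Forall₂.nil
  | _, _, _, List.Forall₂.cons h₁ t₁, List.Forall₂.cons h₂ t₂ =>
      List.Forall₂.cons (le_trans h₁ h₂) (forall₂_le_trans t₁ t₂)

theorem Ple.trans {α : Type*} [LinearOrder α] {X Y Z : Finset α}
    (h₁ : Ple X Y) (h₂ : Ple Y Z) : Ple X Z :=
  forall₂_le_trans h₁ h₂

/-- The incidence algebra `I(Pₙ, k)`: the free `k`-module on the ordered pairs
`(X, Y)` with `X ≤ Y` in `Pₙ`, with product `(U,V)(X,Y) = (X,V)` if `Y = U` and `0`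
otherwise.  It is realised concretely as the `k`-subalgebra of matrices `M` indexed by
`Pₙ` such that `M Y X = 0` unless `X ≤ Y`, the basis pair `(X, Y)` being the matrix
unit `stdBasisMatrix Y X 1`; indeed `E_{V,U} • E_{Y,X} = [U = Y] • E_{V,X}`,
which is exactly the required product of `(U,V)` and `(X,Y)`. -/
noncomputable def IncAlg (n : ℕ) (k : Type*) [CommRing k] :
    Subalgebra k (Matrix (Pn n) (Pn n) k) where
  carrier := {M | ∀ X Y : Pn n, ¬ Ple X.1 Y.1 → M Y X = 0}
  zero_mem' := fun _ _ _ => rfl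
  add_mem' := fun {M N} hM hN X Y h => by
    simp only [Matrix.add_apply, hM X Y h, hN X Y h, add_zero]
  one_mem' := fun X Y h => by
    rw [Matrix.one_apply]
    split
    · next heq => exact absurd (heq ▸ Ple.refl X.1) h
    · rfl
  mul_mem' := fun {M N} hM hN X Y h => by
    rw [Matrix.mul_apply]
    refine Finset.sum_eq_zero fun Z _ => ?_
    by_cases h₁ : Ple Z.1 Y.1
    · by_cases h₂ : Ple X.1 Z.1
      · exact absurd (Ple.trans h₂ h₁) h
      · rw [hN X Z h₂, mul_zero]
    · rw [hM Z Y h₁, zero_mul]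
  algebraMap_mem' := fun r X Y h => by
    rw [Matrix.algebraMap_matrix_apply]
    split
    · next heq => exact absurd (heq ▸ Ple.refl X.1) h
    · rfl

open Classical in
/-- The pair `(S, f(S))` as an element of `Pₙ × Pₙ` (junk value if `n+1 ∈ f(S)`,
which never happens for `S ∈ PCS f`). -/
noncomputable def imageP {n : ℕ} (f : Fin (n+1) → Fin (n+1)) (P : Pn n) : Pn n :=
  if h : Fin.last n ∉ P.1.image f then ⟨P.1.image f, h⟩ else P

open Classical in
/-- `φ(f) = ∑_{S ∈ PCS(f)} (S, f(S))`, where the basis pair `(S, f(S))` of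
`I(Pₙ, k)` is the matrix unit with `1` in row `f(S)`, column `S`. -/
noncomputable def phi (n : ℕ) (k : Type*) [CommRing k] (f : Fin (n+1) → Fin (n+1)) :
    Matrix (Pn n) (Pn n) k :=
  ∑ P ∈ Finset.univ.filter (fun P : Pn n => P.1 ∈ PCS f),
    Matrix.single (imageP f P) P (1 : k)

/-- The map `φ(f) = ∑_{S ∈ PCS(f)} (S, f(S))` is multiplicative on basis elements:
for `f, g ∈ C_{n+1}`, `φ(f) · φ(g) = φ(fg)` in `I(Pₙ, k)`, where `fg : i ↦ f(g(i))`. -/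

lemma pcs_comp {n : ℕ} (f g : Fin (n+1) → Fin (n+1)) (hf : ∀ i, i ≤ f i)
    (T : Finset (Fin (n+1))) :
    T ∈ PCS (fun i => f (g i)) ↔ T ∈ PCS g ∧ T.image g ∈ PCS f := by
  have hflast : f (Fin.last n) = Fin.last n := le_antisymm (Fin.le_last _) (hf _)
  constructor
  · rintro ⟨h1, h2, h3⟩
    have hg2 : Fin.last n ∉ T.image g := by
      intro h
      obtain ⟨t, ht, hgt⟩ := Finset.mem_image.1 h
      exact h2 (Finset.mem_image.2 ⟨t, ht, by rw [hgt, hflast]⟩)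
    have hg3 : Set.InjOn g ↑T := fun a ha b hb hab =>
      h3 ha hb (show f (g a) = f (g b) by rw [hab])
    refine ⟨⟨h1, hg2, hg3⟩, hg2, ?_, ?_⟩
    · rw [Finset.image_image]
      exact h2
    · rintro a ha b hb hab
      simp only [Finset.coe_image, Set.mem_image, Finset.mem_coe] at ha hb
      obtain ⟨s, hs, rfl⟩ := ha
      obtain ⟨t, ht, rfl⟩ := hb
      rw [h3 hs ht hab]
  · rintro ⟨⟨h1, h2, h3⟩, k1, k2, k3⟩
    refine ⟨h1, ?_, ?_⟩
    · rw [show T.image (fun i => f (g i)) = (T.image g).image f from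
        (Finset.image_image).symm]
      exact k2
    · intro a ha b hb hab
      exact h3 ha hb (k3 (Finset.mem_coe.2 (Finset.mem_image_of_mem g ha))
        (Finset.mem_coe.2 (Finset.mem_image_of_mem g hb)) hab)

theorem phi_mul (n : ℕ) (k : Type*) [CommRing k] (f g : Fin (n+1) → Fin (n+1))
    (hf : Monotone f ∧ ∀ i, i ≤ f i) (hg : Monotone g ∧ ∀ i, i ≤ g i) :
    phi n k f * phi n k g = phi n k (fun i => f (g i)) := by
  classical
  have hfl := hf.2
  unfold phi
  rw [Finset.sum_mul_sum, Finset.sum_comm]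
  have step1 : ∀ Q P : Pn n,
      Matrix.single (imageP f P) P (1:k) *
        Matrix.single (imageP g Q) Q (1:k)
      = if P = imageP g Q then
          Matrix.single (imageP f (imageP g Q)) Q (1:k) else 0 := by
    intro Q P
    split
    · next h => subst h; rw [Matrix.single_mul_single_same, one_mul]
    · next h => exact Matrix.single_mul_single_of_ne (h := h) ..
  calc
    ∑ Q ∈ Finset.univ.filter (fun Q : Pn n => Q.1 ∈ PCS g),
      ∑ P ∈ Finset.univ.filter (fun P : Pn n => P.1 ∈ PCS f),
        Matrix.single (imageP f P) P (1:k) *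
          Matrix.single (imageP g Q) Q (1:k)
      = ∑ Q ∈ Finset.univ.filter (fun Q : Pn n => Q.1 ∈ PCS g),
          if (imageP g Q).1 ∈ PCS f then
            Matrix.single (imageP f (imageP g Q)) Q (1:k) else 0 := by
        refine Finset.sum_congr rfl fun Q _ => ?_
        simp only [step1 Q]
        rw [Finset.sum_ite_eq' (Finset.univ.filter (fun P : Pn n => P.1 ∈ PCS f))
          (imageP g Q) (fun _ => Matrix.single (imageP f (imageP g Q)) Q (1:k))]
        simp only [Finset.mem_filter, Finset.mem_univ, true_and]
    _ = ∑ Q ∈ (Finset.univ.filter (fun Q : Pn n => Q.1 ∈ PCS g)).filter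
          (fun Q => (imageP g Q).1 ∈ PCS f),
            Matrix.single (imageP f (imageP g Q)) Q (1:k) :=
        (Finset.sum_filter _ _).symm
    _ = ∑ Q ∈ Finset.univ.filter (fun Q : Pn n => Q.1 ∈ PCS (fun i => f (g i))),
          Matrix.single (imageP (fun i => f (g i)) Q) Q (1:k) := by
        rw [Finset.filter_filter]
        refine Finset.sum_congr ?_ fun Q hQ => ?_
        · ext Q
          simp only [Finset.mem_filter, Finset.mem_univ, true_and]
          rw [pcs_comp f g hfl]
          constructor
          · rintro ⟨hQg, himg⟩
            have h2 : Fin.last n ∉ Q.1.image g := hQg.2.1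
            have e1 : imageP g Q = ⟨Q.1.image g, h2⟩ := by
              simp only [imageP]; rw [dif_pos h2]
            rw [e1] at himg
            exact ⟨hQg, himg⟩
          · rintro ⟨hQg, himg⟩
            have h2 : Fin.last n ∉ Q.1.image g := hQg.2.1
            have e1 : imageP g Q = ⟨Q.1.image g, h2⟩ := by
              simp only [imageP]; rw [dif_pos h2]
            rw [e1]
            exact ⟨hQg, himg⟩
        · simp only [Finset.mem_filter, Finset.mem_univ, true_and] at hQ
          rw [pcs_comp f g hfl] at hQ
          obtain ⟨hQg, himg⟩ := hQ
          have h2 : Fin.last n ∉ Q.1.image g := hQg.2.1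
          have h3 : Fin.last n ∉ (Q.1.image g).image f := himg.2.1
          have h4 : Fin.last n ∉ Q.1.image (fun i => f (g i)) := by
            rw [show Q.1.image (fun i => f (g i)) = (Q.1.image g).image f from
              (Finset.image_image).symm]
            exact h3
          have e1 : imageP g Q = ⟨Q.1.image g, h2⟩ := by
            simp only [imageP]; rw [dif_pos h2]
          have e2 : imageP f (⟨Q.1.image g, h2⟩ : Pn n) = ⟨(Q.1.image g).image f, h3⟩ := by
            simp only [imageP]; rw [dif_pos h3]
          have e3 : imageP (fun i => f (g i)) Q = ⟨Q.1.image (fun i => f (g i)), h4⟩ := by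
            simp only [imageP]; rw [dif_pos h4]
          have e4 : (⟨(Q.1.image g).image f, h3⟩ : Pn n)
              = ⟨Q.1.image (fun i => f (g i)), h4⟩ := by
            apply Subtype.ext
            simp [Finset.image_image, Function.comp_def]
          rw [e1, e2, e4, e3]
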